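/- arXiv:2410.04615 — 3 statements merged into one kernel-verified Lean document; each statement's English description precedes it below -/
import Mathlib

section
/- Assume the dynamics are control affine, a(x,u) = ã(x) + σ(x)B̃(x)u, and the running cost is separable and quadratic in the control, ℓ(x,u) = ℓ̃(x) + (1/2)uᵀRu, with R an m×m symmetric positive definite matrix, and define h(x,u,y,z) := ℓ̃(x) − (1/2) zᵀB̃(x)R⁻¹B̃(x)ᵀz − zᵀB̃(x)u. Let V : [0,T] × ℝⁿ → ℝ be continuously differentiable in t and twice continuously differentiable in x, and suppose V solves the HJB equation ∂ₜV(t,x) + inf_{u∈ℝᵐ}{ ∂ₓV(t,x)ᵀa(x,u) + ℓ(x,u) } + (1/2)Tr(∂ₓₓV(t,x) σ(x)σ(x)ᵀ) = 0 with V(T,x) = ℓ_f(x). Then for every feedback law k : [0,T] × ℝⁿ → ℝᵐ, the function φ = V satisfies ∂ₜφ(t,x) + ∂ₓφ(t,x)ᵀ a(x,k(t,x)) + (1/2)Tr(∂ₓₓφ(t,x) σ(x)σ(x)ᵀ) + h(x, k(t,x), φ(t,x), σ(x)ᵀ∂ₓφ(t,x)) = 0 for all (t,x) ∈ [0,T]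 × ℝⁿ, with φ(T,x) = ℓ_f(x). -/
open Matrix

lemma quad_inf {m : ℕ} (R : Matrix (Fin m) (Fin m) ℝ) (hR : R.PosDef) (c : Fin m → ℝ)
    (K : ℝ) :
    (⨅ u : Fin m → ℝ, (K + (c ⬝ᵥ u + (1/2) * (u ⬝ᵥ R.mulVec u))))
      = K - (1/2) * (c ⬝ᵥ R⁻¹.mulVec c) := by
  have hRT : Rᵀ = R := by simpa using hR.isHermitian.eq
  have hRinv : R * R⁻¹ = 1 :=
    Matrix.mul_nonsing_inv R (isUnit_iff_ne_zero.2 (ne_of_gt hR.det_pos))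
  set w : Fin m → ℝ := R⁻¹.mulVec c with hw
  have hsym : ∀ v u : Fin m → ℝ, v ⬝ᵥ R.mulVec u = u ⬝ᵥ R.mulVec v := by
    intro v u
    rw [Matrix.dotProduct_mulVec, ← Matrix.mulVec_transpose, hRT, dotProduct_comm]
  have hRw : ∀ u, u ⬝ᵥ R.mulVec w = u ⬝ᵥ c := by
    intro u; rw [hw, Matrix.mulVec_mulVec, hRinv, Matrix.one_mulVec]
  have expand : ∀ u : Fin m → ℝ, K + (c ⬝ᵥ u + (1/2) * (u ⬝ᵥ R.mulVec u))
      = (1/2) * ((u + w) ⬝ᵥ R.mulVec (u + w)) + (K - (1/2) * (c ⬝ᵥ w)) := by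
    intro u
    have e1 : (u + w) ⬝ᵥ R.mulVec (u + w)
        = u ⬝ᵥ R.mulVec u + u ⬝ᵥ R.mulVec w + w ⬝ᵥ R.mulVec u + w ⬝ᵥ R.mulVec w := by
      simp [Matrix.mulVec_add, add_dotProduct, dotProduct_add]; ring
    rw [e1, hsym w u, hRw u, hRw w, dotProduct_comm w c, dotProduct_comm u c]
    ring
  have hnonneg : ∀ v : Fin m → ℝ, 0 ≤ v ⬝ᵥ R.mulVec v := by
    intro v; simpa using hR.posSemidef.dotProduct_mulVec_nonneg v
  have hbdd : ∀ u : Fin m → ℝ,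
      K - (1/2) * (c ⬝ᵥ w) ≤ K + (c ⬝ᵥ u + (1/2) * (u ⬝ᵥ R.mulVec u)) := by
    intro u; rw [expand u]; nlinarith [hnonneg (u + w)]
  apply le_antisymm
  · have hle := ciInf_le
      (f := fun u : Fin m → ℝ => K + (c ⬝ᵥ u + (1/2) * (u ⬝ᵥ R.mulVec u)))
      ⟨K - (1/2) * (c ⬝ᵥ w), by rintro y ⟨u, rfl⟩; exact hbdd u⟩ (-w)
    calc _ ≤ K + (c ⬝ᵥ (-w) + (1/2) * ((-w) ⬝ᵥ R.mulVec (-w))) := hle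
    _ = K - (1/2) * (c ⬝ᵥ w) := by rw [expand (-w)]; simp
  · exact le_ciInf hbdd

/-- Partial derivative of `f : ℝⁿ → ℝ` in the `i`-th coordinate at `x`. -/
noncomputable def pdv {n : ℕ} (i : Fin n) (f : (Fin n → ℝ) → ℝ) (x : Fin n → ℝ) : ℝ :=
  deriv (fun s => f (Function.update x i s)) (x i)

/-- Spatial gradient of `f : ℝⁿ → ℝ` at `x`. -/
noncomputable def grad {n : ℕ} (f : (Fin n → ℝ) → ℝ) (x : Fin n → ℝ) : Fin n → ℝ :=
  fun i => pdv i f x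

/-- Spatial Hessian of `f : ℝⁿ → ℝ` at `x`. -/
noncomputable def hess {n : ℕ} (f : (Fin n → ℝ) → ℝ) (x : Fin n → ℝ) :
    Matrix (Fin n) (Fin n) ℝ :=
  Matrix.of fun i j => pdv i (fun y => pdv j f y) x

/-- If `V`, C¹ in `t` and C² in `x`, solves the HJB equation
`∂ₜV + inf_u { ∂ₓVᵀa(x,u) + ℓ(x,u) } + (1/2)Tr(∂ₓₓV σσᵀ) = 0`, `V(T,·) = ℓ_f`, in the
control-affine, separable-quadratic-cost setting with driver
`h(x,u,y,z) = ℓ̃(x) - (1/2) zᵀB̃(x)R⁻¹B̃(x)ᵀz - zᵀB̃(x)u`, then for every feedback law `k`,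
`φ = V` satisfies `∂ₜφ + ∂ₓφᵀ a(x,k(t,x)) + (1/2)Tr(∂ₓₓφ σσᵀ) + h(x,k(t,x),φ,σᵀ∂ₓφ) = 0`
with `φ(T,·) = ℓ_f`. -/
theorem stmt_3 {n m : ℕ} {T : ℝ} (hT : 0 < T)
    (atil : (Fin n → ℝ) → (Fin n → ℝ))
    (σ : (Fin n → ℝ) → Matrix (Fin n) (Fin n) ℝ)
    (Btil : (Fin n → ℝ) → Matrix (Fin n) (Fin m) ℝ)
    (ltil : (Fin n → ℝ) → ℝ) (ℓf : (Fin n → ℝ) → ℝ)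
    (R : Matrix (Fin m) (Fin m) ℝ) (hR : R.PosDef)
    (a : (Fin n → ℝ) → (Fin m → ℝ) → (Fin n → ℝ))
    (ha : ∀ x u, a x u = atil x + (σ x * Btil x).mulVec u)
    (ℓ : (Fin n → ℝ) → (Fin m → ℝ) → ℝ)
    (hℓ : ∀ x u, ℓ x u = ltil x + (1 / 2) * (u ⬝ᵥ R.mulVec u))
    (h : (Fin n → ℝ) → (Fin m → ℝ) → ℝ → (Fin n → ℝ) → ℝ)
    (hh : ∀ x u y z, h x u y z =
      ltil x - (1 / 2) * (z ⬝ᵥ (Btil x * R⁻¹ * (Btil x)ᵀ).mulVec z) - z ⬝ᵥ (Btil x).mulVec u)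
    (V : ℝ → (Fin n → ℝ) → ℝ)
    (hV1 : ∀ x, ContDiff ℝ 1 fun t => V t x)
    (hV2 : ∀ t, ContDiff ℝ 2 (V t))
    (hHJB : ∀ t ∈ Set.Icc (0 : ℝ) T, ∀ x : Fin n → ℝ,
      deriv (fun s => V s x) t
        + (⨅ u : Fin m → ℝ, (grad (V t) x ⬝ᵥ a x u + ℓ x u))
        + (1 / 2) * Matrix.trace (hess (V t) x * (σ x * (σ x)ᵀ)) = 0)
    (hVT : ∀ x, V T x = ℓf x) :
    ∀ k : ℝ → (Fin n → ℝ) → (Fin m → ℝ),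
      (∀ t ∈ Set.Icc (0 : ℝ) T, ∀ x : Fin n → ℝ,
        deriv (fun s => V s x) t
          + grad (V t) x ⬝ᵥ a x (k t x)
          + (1 / 2) * Matrix.trace (hess (V t) x * (σ x * (σ x)ᵀ))
          + h x (k t x) (V t x) ((σ x)ᵀ.mulVec (grad (V t) x)) = 0) ∧
      ∀ x, V T x = ℓf x := by
  intro k
  refine ⟨?_, hVT⟩
  intro t ht x
  have hHJ := hHJB t ht x
  set g : Fin n → ℝ := grad (V t) x with hg
  set z : Fin n → ℝ := (σ x)ᵀ.mulVec g with hz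
  set c : Fin m → ℝ := (Btil x)ᵀ.mulVec z with hc
  have hcu : ∀ u : Fin m → ℝ, g ⬝ᵥ (σ x * Btil x).mulVec u = c ⬝ᵥ u := by
    intro u
    rw [hc, hz, Matrix.dotProduct_mulVec, Matrix.mulVec_transpose, Matrix.mulVec_transpose,
      Matrix.vecMul_vecMul]
  have hquad : z ⬝ᵥ (Btil x * R⁻¹ * (Btil x)ᵀ).mulVec z = c ⬝ᵥ R⁻¹.mulVec c := by
    rw [hc, ← Matrix.mulVec_mulVec, ← Matrix.mulVec_mulVec, Matrix.dotProduct_mulVec,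
      Matrix.mulVec_transpose]
  have hinf : (⨅ u : Fin m → ℝ, (g ⬝ᵥ a x u + ℓ x u))
      = (g ⬝ᵥ atil x + ltil x) - (1/2) * (c ⬝ᵥ R⁻¹.mulVec c) := by
    have hbody : ∀ u : Fin m → ℝ, g ⬝ᵥ a x u + ℓ x u
        = (g ⬝ᵥ atil x + ltil x) + (c ⬝ᵥ u + (1/2) * (u ⬝ᵥ R.mulVec u)) := by
      intro u
      rw [ha, hℓ, dotProduct_add, hcu u]
      ring
    simp only [hbody]
    exact quad_inf R hR c (g ⬝ᵥ atil x + ltil x)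
  have hzB : ∀ u : Fin m → ℝ, z ⬝ᵥ (Btil x).mulVec u = c ⬝ᵥ u := by
    intro u
    rw [hc, Matrix.dotProduct_mulVec, Matrix.mulVec_transpose]
  have hha : g ⬝ᵥ a x (k t x) + h x (k t x) (V t x) z
      = (g ⬝ᵥ atil x + ltil x) - (1/2) * (c ⬝ᵥ R⁻¹.mulVec c) := by
    rw [ha, hh, dotProduct_add, hcu (k t x), hquad, hzB (k t x)]
    ring
  rw [hinf] at hHJ
  linarith [hha]
end

section
/- Let T > 0, let α : [0,T] × ℝⁿ → ℝⁿ be continuously differentiable in x, let D : ℝⁿ → ℝ^{n×n} be twice continuously differentiable, and let p : [0,T] × ℝⁿ → (0,∞) be continuously differentiable in t and twice continuously differentiable in x, solving the Fokker–Planck equation ∂ₜp(t,x) = − Σᵢ ∂ᵢ( αᵢ(t,x) p(t,x) ) + (1/2) Σᵢⱼ ∂ᵢ∂ⱼ( Dᵢⱼ(x) p(t,x) ) for all (t,x). Define the score drift b : [0,T] × ℝⁿ → ℝⁿ by bᵢ(t,x) := − (1/p(t,x)) Σⱼ ∂ⱼ( Dⱼᵢ(x) p(t,x) ). Then p also solves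 the time-reversed Fokker–Planck equation ∂ₜp(t,x) = − Σᵢ ∂ᵢ( (αᵢ(t,x) + bᵢ(t,x)) p(t,x) ) − (1/2) Σᵢⱼ ∂ᵢ∂ⱼ( Dᵢⱼ(x) p(t,x) ) for all (t,x) ∈ [0,T] × ℝⁿ. -/
open Matrix

lemma pdv_eq_fderiv {n : ℕ} (i : Fin n) {f : (Fin n → ℝ) → ℝ} {x : Fin n → ℝ}
    (hf : DifferentiableAt ℝ f x) :
    pdv i f x = fderiv ℝ f x (Pi.single i 1) := by
  have hu : HasDerivAt (Function.update x i) (Pi.single i (1:ℝ)) (x i) :=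
    hasDerivAt_update x i (x i)
  have hfx : HasFDerivAt f (fderiv ℝ f x) (Function.update x i (x i)) := by
    rw [Function.update_eq_self]; exact hf.hasFDerivAt
  exact (hfx.comp_hasDerivAt (x i) hu).deriv

lemma pdv_fun_eq {n : ℕ} (j : Fin n) {f : (Fin n → ℝ) → ℝ} (hf : ContDiff ℝ 2 f) :
    (fun y => pdv j f y) = fun y => fderiv ℝ f y (Pi.single j 1) := by
  funext y
  exact pdv_eq_fderiv j ((hf.differentiable (by norm_num)) y)

lemma pdv_contDiff {n : ℕ} (j : Fin n) {f : (Fin n → ℝ) → ℝ} (hf : ContDiff ℝ 2 f) :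
    ContDiff ℝ 1 (fun y => pdv j f y) := by
  rw [pdv_fun_eq j hf]
  exact (hf.fderiv_right (by norm_num)).clm_apply contDiff_const

lemma pdv_comm {n : ℕ} (i j : Fin n) {f : (Fin n → ℝ) → ℝ} (hf : ContDiff ℝ 2 f)
    (x : Fin n → ℝ) : pdv i (fun y => pdv j f y) x = pdv j (fun y => pdv i f y) x := by
  have hfd : Differentiable ℝ (fderiv ℝ f) :=
    (hf.fderiv_right (m := 1) (by norm_num)).differentiable (by norm_num)
  have key2 : ∀ (i : Fin n) (v : Fin n → ℝ),
      pdv i (fun y => fderiv ℝ f y v) x = fderiv ℝ (fderiv ℝ f) x (Pi.single i 1) v := by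
    intro i v
    have hdiff : DifferentiableAt ℝ (fun y => fderiv ℝ f y v) x :=
      ((hf.fderiv_right (m := 1) (by norm_num)).clm_apply (contDiff_const (c := v))).differentiable
        (by norm_num) x
    rw [pdv_eq_fderiv i hdiff]
    rw [fderiv_clm_apply (hfd x) (differentiableAt_const v)]
    simp
  have hsym : ∀ u v, fderiv ℝ (fderiv ℝ f) x u v = fderiv ℝ (fderiv ℝ f) x v u := by
    intro u v
    exact second_derivative_symmetric (fun y => ((hf.differentiable (by norm_num)) y).hasFDerivAt)
      (hfd x).hasFDerivAt u v
  rw [pdv_fun_eq j hf, pdv_fun_eq i hf, key2 i, key2 j, hsym]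

lemma pdv_sub_sum {n : ℕ} (i : Fin n) {f : (Fin n → ℝ) → ℝ} {g : Fin n → (Fin n → ℝ) → ℝ}
    {x : Fin n → ℝ} (hf : DifferentiableAt ℝ f x) (hg : ∀ j, DifferentiableAt ℝ (g j) x) :
    pdv i (fun y => f y - ∑ j, g j y) x = pdv i f x - ∑ j, pdv i (g j) x := by
  have hgs : DifferentiableAt ℝ (fun y => ∑ j, g j y) x :=
    DifferentiableAt.fun_sum fun j _ => hg j
  rw [pdv_eq_fderiv i (hf.fun_sub hgs), fderiv_fun_sub hf hgs, fderiv_fun_sum (fun j _ => hg j)]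
  simp only [ContinuousLinearMap.sub_apply, ContinuousLinearMap.sum_apply]
  rw [pdv_eq_fderiv i hf]
  congr 1
  exact Finset.sum_congr rfl fun j _ => (pdv_eq_fderiv i (hg j)).symm

/-- If the strictly positive density `p`, C¹ in `t` and C² in `x`, solves the
Fokker–Planck equation `∂ₜp = -Σᵢ ∂ᵢ(αᵢ p) + (1/2)Σᵢⱼ ∂ᵢ∂ⱼ(Dᵢⱼ p)` (`α` C¹ in `x`, `D` C²),
and `bᵢ(t,x) = -(1/p) Σⱼ ∂ⱼ(Dⱼᵢ p)` is the score drift, then `p` also solves the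
time-reversed Fokker–Planck equation
`∂ₜp = -Σᵢ ∂ᵢ((αᵢ + bᵢ) p) - (1/2)Σᵢⱼ ∂ᵢ∂ⱼ(Dᵢⱼ p)`. -/
theorem stmt_8 {n : ℕ} {T : ℝ} (hT : 0 < T)
    (α : ℝ → (Fin n → ℝ) → (Fin n → ℝ))
    (hα : ∀ t, ∀ i : Fin n, ContDiff ℝ 1 fun x => α t x i)
    (D : (Fin n → ℝ) → Matrix (Fin n) (Fin n) ℝ)
    (hD : ∀ i j : Fin n, ContDiff ℝ 2 fun x => D x i j)
    (p : ℝ → (Fin n → ℝ) → ℝ)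
    (hppos : ∀ t x, 0 < p t x)
    (hp1 : ∀ x, ContDiff ℝ 1 fun t => p t x)
    (hp2 : ∀ t, ContDiff ℝ 2 (p t))
    (hFPE : ∀ t ∈ Set.Icc (0 : ℝ) T, ∀ x : Fin n → ℝ,
      deriv (fun s => p s x) t =
        -(∑ i, pdv i (fun y => α t y i * p t y) x)
          + (1 / 2) * ∑ i, ∑ j, pdv i (fun y => pdv j (fun y' => D y' i j * p t y') y) x)
    (b : ℝ → (Fin n → ℝ) → (Fin n → ℝ))
    (hb : ∀ t x, ∀ i : Fin n,
      b t x i = -(1 / p t x) * ∑ j, pdv j (fun y => D y j i * p t y) x) :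
    ∀ t ∈ Set.Icc (0 : ℝ) T, ∀ x : Fin n → ℝ,
      deriv (fun s => p s x) t =
        -(∑ i, pdv i (fun y => (α t y i + b t y i) * p t y) x)
          - (1 / 2) * ∑ i, ∑ j, pdv i (fun y => pdv j (fun y' => D y' i j * p t y') y) x := by
  intro t ht x
  -- C² of the products D i j * p
  have hG : ∀ i j : Fin n, ContDiff ℝ 2 fun y => D y i j * p t y :=
    fun i j => (hD i j).mul (hp2 t)
  -- rewrite the drift term
  have hfun : ∀ i : Fin n, (fun y => (α t y i + b t y i) * p t y)
      = fun y => α t y i * p t y - ∑ j, pdv j (fun y' => D y' j i * p t y') y := by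
    intro i
    funext y
    have hpne : p t y ≠ 0 := (hppos t y).ne'
    rw [hb]
    field_simp
    ring
  have hterm : ∀ i : Fin n, pdv i (fun y => (α t y i + b t y i) * p t y) x
      = pdv i (fun y => α t y i * p t y) x
        - ∑ j, pdv i (fun y => pdv j (fun y' => D y' j i * p t y') y) x := by
    intro i
    rw [hfun i]
    exact pdv_sub_sum i
      (((hα t i).mul ((hp2 t).of_le one_le_two)).differentiable (by norm_num) x)
      (fun j => ((pdv_contDiff j (hG j i)).differentiable (by norm_num)) x)
  -- Schwarz swap
  have hswap : ∑ i, ∑ j, pdv i (fun y => pdv j (fun y' => D y' j i * p t y') y) x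
      = ∑ i, ∑ j, pdv i (fun y => pdv j (fun y' => D y' i j * p t y') y) x := by
    have h1 : ∀ i j : Fin n, pdv i (fun y => pdv j (fun y' => D y' j i * p t y') y) x
        = pdv j (fun y => pdv i (fun y' => D y' j i * p t y') y) x :=
      fun i j => pdv_comm i j (hG j i) x
    calc ∑ i, ∑ j, pdv i (fun y => pdv j (fun y' => D y' j i * p t y') y) x
        = ∑ i, ∑ j, pdv j (fun y => pdv i (fun y' => D y' j i * p t y') y) x :=
          Finset.sum_congr rfl fun i _ => Finset.sum_congr rfl fun j _ => h1 i j
      _ = ∑ j, ∑ i, pdv j (fun y => pdv i (fun y' => D y' j i * p t y') y) x :=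
          Finset.sum_comm
  rw [hFPE t ht x]
  simp only [hterm]
  rw [Finset.sum_sub_distrib, hswap]
  ring
end

section
/- Let x¹, …, x^N ∈ ℝⁿ be given points with empirical mean m̂ := (1/N)Σᵢ xⁱ and empirical covariance Σ̂ := (1/N)Σᵢ (xⁱ − m̂)(xⁱ − m̂)ᵀ, and assume Σ̂ is invertible. Let D ∈ ℝ^{n×n} be symmetric. Then over all affine maps b(x) = Ax + c with A ∈ ℝ^{n×n} and c ∈ ℝⁿ, the empirical score-matching objective F(A,c) := (1/N) Σᵢ [ (1/2)‖A xⁱ + c‖² − Tr(D A) ] has the unique global minimizer A* = D Σ̂⁻¹ and c* = − D Σ̂⁻¹ m̂; that is, the minimizing affine drift is b(x) = D Σ̂⁻¹ (x − m̂). -/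
open Matrix

private lemma aux_trace12 {n : ℕ} (M P : Matrix (Fin n) (Fin n) ℝ) (u : Fin n → ℝ) :
    ∑ k, (M.mulVec u) k * (P.mulVec u) k = Matrix.trace (vecMulVec u u * Mᵀ * P) := by
  simp only [Matrix.trace, Matrix.mul_apply, Matrix.vecMulVec_apply, Matrix.mulVec,
    dotProduct, Matrix.transpose_apply, Finset.sum_mul, Finset.mul_sum, Matrix.diag_apply]
  conv_rhs => rw [Finset.sum_comm]
  refine Finset.sum_congr rfl fun b _ => ?_
  refine Finset.sum_congr rfl fun c _ => ?_
  refine Finset.sum_congr rfl fun m _ => ?_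
  ring

private lemma aux_sq12 {n : ℕ} (a b : Fin n → ℝ) :
    ∑ k, (a k + b k) ^ 2 = ∑ k, (a k) ^ 2 + (2 * ∑ k, a k * b k + ∑ k, (b k) ^ 2) := by
  simp only [add_sq, Finset.sum_add_distrib, Finset.mul_sum]
  ring_nf

private lemma aux_vmv12 {n : ℕ} (u u' : Fin n → ℝ) (E : Matrix (Fin n) (Fin n) ℝ) :
    vecMulVec u u' * Eᵀ = vecMulVec u (E.mulVec u') := by
  ext j k
  simp only [Matrix.mul_apply, Matrix.vecMulVec_apply, Matrix.transpose_apply, Matrix.mulVec,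
    dotProduct, Finset.mul_sum]
  exact Finset.sum_congr rfl fun l _ => by ring

/-- Given points `x¹, …, x^N ∈ ℝⁿ` with empirical mean `m̂` and invertible
empirical covariance `Σ̂`, and `D` symmetric, the empirical score-matching objective
`F(A,c) = (1/N) Σᵢ [ (1/2)‖Axⁱ + c‖² - Tr(DA) ]` over affine maps `b(x) = Ax + c` has the
unique global minimizer `A* = DΣ̂⁻¹`, `c* = -DΣ̂⁻¹m̂`, i.e. the minimizing affine drift is
`b(x) = DΣ̂⁻¹(x - m̂)`. -/
theorem stmt_12 {n N : ℕ} (hN : 0 < N)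
    (x : Fin N → (Fin n → ℝ))
    (mhat : Fin n → ℝ) (hmhat : mhat = (N : ℝ)⁻¹ • ∑ i, x i)
    (Shat : Matrix (Fin n) (Fin n) ℝ)
    (hShat : Shat = (N : ℝ)⁻¹ • ∑ i, vecMulVec (x i - mhat) (x i - mhat))
    (hShatinv : IsUnit Shat.det)
    (D : Matrix (Fin n) (Fin n) ℝ) (hD : D.IsSymm)
    (F : Matrix (Fin n) (Fin n) ℝ → (Fin n → ℝ) → ℝ)
    (hF : ∀ A c, F A c = (N : ℝ)⁻¹ *
      ∑ i, ((1 / 2) * (∑ k, (A.mulVec (x i) + c) k ^ 2) - Matrix.trace (D * A)))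
    (Astar : Matrix (Fin n) (Fin n) ℝ) (hAstar : Astar = D * Shat⁻¹)
    (cstar : Fin n → ℝ) (hcstar : cstar = -((D * Shat⁻¹).mulVec mhat)) :
    ∀ (A : Matrix (Fin n) (Fin n) ℝ) (c : Fin n → ℝ),
      (A, c) ≠ (Astar, cstar) → F Astar cstar < F A c := by
  intro A c hne
  have hNne : (N : ℝ) ≠ 0 := Nat.cast_ne_zero.mpr hN.ne'
  set v : Fin N → Fin n → ℝ := fun i => x i - mhat with hv
  set E : Matrix (Fin n) (Fin n) ℝ := A - Astar with hE
  set d : Fin n → ℝ := A.mulVec mhat + c with hd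
  set w : Fin N → Fin n → ℝ := fun i => E.mulVec (v i) + d with hw
  -- sum of centered points is zero
  have hsumv : ∑ i, v i = 0 := by
    simp only [hv]
    rw [Finset.sum_sub_distrib, hmhat, Finset.sum_const, Finset.card_univ, Fintype.card_fin,
      ← Nat.cast_smul_eq_nsmul ℝ, smul_smul, mul_inv_cancel₀ hNne, one_smul, sub_self]
  -- Shat is symmetric
  have hSsym : Shatᵀ = Shat := by
    rw [hShat, Matrix.transpose_smul]
    congr 1
    rw [Matrix.transpose_sum]
    refine Finset.sum_congr rfl fun i _ => ?_
    ext a b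
    simp [Matrix.vecMulVec_apply, mul_comm]
  have hAS : Astar * Shat = D := by
    rw [hAstar, Matrix.mul_assoc, Matrix.nonsing_inv_mul Shat hShatinv, Matrix.mul_one]
  have hSB : Shat * Astarᵀ = D := by
    have hT : Astarᵀ = Shat⁻¹ * D := by
      rw [hAstar, Matrix.transpose_mul, Matrix.transpose_nonsing_inv, hSsym, hD.eq]
    rw [hT, ← Matrix.mul_assoc, Matrix.mul_nonsing_inv Shat hShatinv, Matrix.one_mul]
  have hA' : A = Astar + E := by rw [hE]; abel
  -- representations
  have hrep : ∀ i, A.mulVec (x i) + c = Astar.mulVec (v i) + w i := by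
    intro i
    have hxi : x i = v i + mhat := by simp [hv]
    calc A.mulVec (x i) + c
        = A.mulVec (v i + mhat) + c := by rw [← hxi]
      _ = A.mulVec (v i) + (A.mulVec mhat + c) := by rw [Matrix.mulVec_add]; abel
      _ = (Astar + E).mulVec (v i) + d := by rw [← hA', hd]
      _ = Astar.mulVec (v i) + (E.mulVec (v i) + d) := by rw [Matrix.add_mulVec]; abel
      _ = Astar.mulVec (v i) + w i := by simp only [hw]
  have hc0 : Astar.mulVec mhat + cstar = 0 := by
    rw [hcstar, ← hAstar]; abel
  have hstar : ∀ i, Astar.mulVec (x i) + cstar = Astar.mulVec (v i) := by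
    intro i
    have hxi : x i = v i + mhat := by simp [hv]
    calc Astar.mulVec (x i) + cstar
        = Astar.mulVec (v i + mhat) + cstar := by rw [← hxi]
      _ = Astar.mulVec (v i) + (Astar.mulVec mhat + cstar) := by rw [Matrix.mulVec_add]; abel
      _ = Astar.mulVec (v i) := by rw [hc0, add_zero]
  -- expansion of the squared norm
  have hsq : ∀ i, ∑ k, (A.mulVec (x i) + c) k ^ 2 =
      ∑ k, (Astar.mulVec (v i)) k ^ 2 +
        (2 * ∑ k, (Astar.mulVec (v i)) k * w i k + ∑ k, (w i k) ^ 2) := by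
    intro i
    rw [hrep i]
    simpa using aux_sq12 (Astar.mulVec (v i)) (w i)
  -- cross term equals N * trace (D * E)
  have hsumAv : ∑ i, Astar.mulVec (v i) = 0 := by
    have h := (map_sum (Matrix.mulVecLin Astar) v Finset.univ).symm
    simp only [Matrix.mulVecLin_apply] at h
    rw [h, hsumv, Matrix.mulVec_zero]
  have hcross : ∑ i, ∑ k, (Astar.mulVec (v i)) k * w i k = (N : ℝ) * Matrix.trace (D * E) := by
    have hsplit : ∀ i, ∑ k, (Astar.mulVec (v i)) k * w i k =
        ∑ k, (Astar.mulVec (v i)) k * (E.mulVec (v i)) k +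
          ∑ k, (Astar.mulVec (v i)) k * d k := by
      intro i
      rw [← Finset.sum_add_distrib]
      refine Finset.sum_congr rfl fun k _ => ?_
      simp only [hw, Pi.add_apply]
      ring
    simp only [hsplit]
    rw [Finset.sum_add_distrib]
    have hzero : ∑ i, ∑ k, (Astar.mulVec (v i)) k * d k = 0 := by
      rw [Finset.sum_comm]
      refine Finset.sum_eq_zero fun k _ => ?_
      rw [← Finset.sum_mul]
      have h0 : ∑ i, (Astar.mulVec (v i)) k = 0 := by
        rw [← Finset.sum_apply k Finset.univ (fun i => Astar.mulVec (v i)), hsumAv]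
        simp
      rw [h0, zero_mul]
    rw [hzero, add_zero]
    have htr : ∀ i, ∑ k, (Astar.mulVec (v i)) k * (E.mulVec (v i)) k =
        Matrix.trace (vecMulVec (v i) (v i) * (Astarᵀ * E)) := by
      intro i
      rw [aux_trace12 Astar E (v i), Matrix.mul_assoc]
    simp only [htr]
    rw [← Matrix.trace_sum]
    have hsum : ∑ i, vecMulVec (v i) (v i) * (Astarᵀ * E) =
        ((N : ℝ) • Shat) * (Astarᵀ * E) := by
      rw [← Finset.sum_mul]
      congr 1
      rw [hShat, smul_smul, mul_inv_cancel₀ hNne, one_smul]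
    rw [hsum, Matrix.smul_mul, Matrix.trace_smul, ← Matrix.mul_assoc, hSB, smul_eq_mul]
  -- the value of F at (A, c) and at (Astar, cstar)
  have hFA : F A c = (N : ℝ)⁻¹ * ∑ i,
      ((1 / 2) * (∑ k, (Astar.mulVec (v i)) k ^ 2) + ∑ k, (Astar.mulVec (v i)) k * w i k +
        (1 / 2) * ∑ k, (w i k) ^ 2 - Matrix.trace (D * A)) := by
    rw [hF]
    congr 1
    refine Finset.sum_congr rfl fun i _ => ?_
    rw [hsq i]; ring
  have hFAstar : F Astar cstar = (N : ℝ)⁻¹ * ∑ i,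
      ((1 / 2) * (∑ k, (Astar.mulVec (v i)) k ^ 2) - Matrix.trace (D * Astar)) := by
    rw [hF]
    congr 1
    refine Finset.sum_congr rfl fun i _ => ?_
    rw [hstar i]
  have htrE : Matrix.trace (D * A) - Matrix.trace (D * Astar) = Matrix.trace (D * E) := by
    rw [hE, Matrix.mul_sub, Matrix.trace_sub]
  have hdiff : F A c - F Astar cstar = (N : ℝ)⁻¹ * ∑ i, (1 / 2) * ∑ k, (w i k) ^ 2 := by
    rw [hFA, hFAstar, ← mul_sub, ← Finset.sum_sub_distrib]
    have hcongr : ∑ i, ((1 / 2) * (∑ k, (Astar.mulVec (v i)) k ^ 2) +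
          ∑ k, (Astar.mulVec (v i)) k * w i k + (1 / 2) * ∑ k, (w i k) ^ 2 -
          Matrix.trace (D * A) -
          ((1 / 2) * (∑ k, (Astar.mulVec (v i)) k ^ 2) - Matrix.trace (D * Astar))) =
        ∑ i, (∑ k, (Astar.mulVec (v i)) k * w i k + (1 / 2) * ∑ k, (w i k) ^ 2 -
          (Matrix.trace (D * A) - Matrix.trace (D * Astar))) := by
      refine Finset.sum_congr rfl fun i _ => ?_; ring
    rw [hcongr]
    simp only [htrE]
    rw [Finset.sum_sub_distrib, Finset.sum_add_distrib, hcross, Finset.sum_const,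
      Finset.card_univ, Fintype.card_fin, nsmul_eq_mul]
    ring
  -- positivity
  rw [← sub_pos, hdiff]
  refine mul_pos (inv_pos.mpr (Nat.cast_pos.mpr hN)) ?_
  have hterm : ∀ i ∈ Finset.univ, (0 : ℝ) ≤ (1 / 2) * ∑ k, (w i k) ^ 2 := by
    intro i _
    positivity
  by_cases hw0 : ∀ i, w i = 0
  · -- impossible: it would force (A, c) = (Astar, cstar)
    exfalso
    have hd0 : d = 0 := by
      have h1 : ∑ i, w i = 0 := Finset.sum_eq_zero fun i _ => hw0 i
      have h2 : ∑ i, w i = (N : ℝ) • d := by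
        simp only [hw]
        rw [Finset.sum_add_distrib]
        have h3 : ∑ i, E.mulVec (v i) = 0 := by
          have h := (map_sum (Matrix.mulVecLin E) v Finset.univ).symm
          simp only [Matrix.mulVecLin_apply] at h
          rw [h, hsumv, Matrix.mulVec_zero]
        rw [h3, zero_add, Finset.sum_const, Finset.card_univ, Fintype.card_fin,
          ← Nat.cast_smul_eq_nsmul ℝ]
      rw [h1] at h2
      have := h2.symm
      rcases smul_eq_zero.mp this with h | h
      · exact absurd h hNne
      · exact h
    have hEv : ∀ i, E.mulVec (v i) = 0 := by
      intro i
      have h := hw0 i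
      simp only [hw, hd0, add_zero] at h
      exact h
    have hSE : Shat * Eᵀ = 0 := by
      rw [hShat, Matrix.smul_mul, Finset.sum_mul]
      have hz : ∀ i ∈ Finset.univ, vecMulVec (x i - mhat) (x i - mhat) * Eᵀ = 0 := by
        intro i _
        rw [aux_vmv12 (x i - mhat) (x i - mhat) E]
        have h : E.mulVec (x i - mhat) = 0 := hEv i
        rw [h]
        ext a b
        simp [Matrix.vecMulVec_apply]
      rw [Finset.sum_eq_zero hz, smul_zero]
    have hET : Eᵀ = 0 := by
      calc Eᵀ = (Shat⁻¹ * Shat) * Eᵀ := by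
            rw [Matrix.nonsing_inv_mul Shat hShatinv, Matrix.one_mul]
        _ = Shat⁻¹ * (Shat * Eᵀ) := by rw [Matrix.mul_assoc]
        _ = 0 := by rw [hSE, Matrix.mul_zero]
    have hE0 : E = 0 := Matrix.transpose_eq_zero.mp hET
    have hAeq : A = Astar := by
      have h : A - Astar = 0 := by rw [← hE, hE0]
      exact sub_eq_zero.mp h
    have hceq : c = cstar := by
      have h : A.mulVec mhat + c = 0 := by rw [← hd, hd0]
      have h2 : c = -(A.mulVec mhat) := eq_neg_of_add_eq_zero_right h
      rw [h2, hcstar, ← hAstar, hAeq]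
    exact hne (by rw [hAeq, hceq])
  · push_neg at hw0
    obtain ⟨i, hi⟩ := hw0
    obtain ⟨k, hk⟩ : ∃ k, w i k ≠ 0 := by
      by_contra h
      push_neg at h
      exact hi (funext fun k => h k)
    refine Finset.sum_pos' hterm ⟨i, Finset.mem_univ i, ?_⟩
    have hpos : 0 < ∑ k, (w i k) ^ 2 := by
      refine Finset.sum_pos' (fun k _ => sq_nonneg _) ⟨k, Finset.mem_univ k, ?_⟩
      exact lt_of_le_of_ne (sq_nonneg _) (Ne.symm (pow_ne_zero 2 hk))
    linarith
end
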